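/- Let K be a field and A_1,...,A_n finite nonempty subsets of K. The vanishing ideal of the cartesian product X* = A_1 × ... × A_n in K[t_1,...,t_n] equals the ideal generated by the polynomials f_i = ∏_{γ ∈ A_i} (t_i − γ) for i = 1,...,n. -/

import Mathlib

open MvPolynomial Polynomial

private lemma symm_C_eq_rename {K : Type*} [CommRing K] (n : ℕ) (p : MvPolynomial (Fin n) K) :
    (MvPolynomial.finSuccEquiv K n).symm (Polynomial.C p) = rename Fin.succ p := by
  apply (MvPolynomial.finSuccEquiv K n).injective
  rw [AlgEquiv.apply_symm_apply]
  induction p using MvPolynomial.induction_on with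
  | C a => simp [MvPolynomial.finSuccEquiv_apply]
  | add p q hp hq => simp [hp, hq]
  | mul_X p i hp => simp [hp, MvPolynomial.finSuccEquiv_X_succ]

private lemma aux_mem_span {K : Type*} [Field K] : ∀ (n : ℕ) (A : Fin n → Finset K)
    (f : MvPolynomial (Fin n) K),
    (∀ x : Fin n → K, (∀ i, x i ∈ A i) → MvPolynomial.eval x f = 0) →
    f ∈ Ideal.span (Set.range fun i : Fin n =>
        ∏ γ ∈ A i, (MvPolynomial.X i - MvPolynomial.C γ)) := by
  intro n
  induction n with
  | zero =>
    intro A f hf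
    obtain ⟨a, rfl⟩ := MvPolynomial.C_surjective (Fin 0) f
    have := hf (fun i => i.elim0) (fun i => i.elim0)
    rw [MvPolynomial.eval_C] at this
    simp [this]
  | succ n IH =>
    intro A f hf
    set e := MvPolynomial.finSuccEquiv K n with he
    set g : (MvPolynomial (Fin n) K)[X] := ∏ γ ∈ A 0, (Polynomial.X - Polynomial.C (MvPolynomial.C γ)) with hg
    have hgmonic : g.Monic := monic_prod_of_monic _ _ (fun γ _ => monic_X_sub_C _)
    have hgdeg : g.natDegree = (A 0).card := by
      rw [hg, natDegree_prod _ _ (fun γ _ => (monic_X_sub_C _).ne_zero)]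
      simp
    rcases (A 0).eq_empty_or_nonempty with h0A | h0A
    · have h1 : (1 : MvPolynomial (Fin (n+1)) K) ∈ Ideal.span (Set.range fun i : Fin (n+1) =>
          ∏ γ ∈ A i, (MvPolynomial.X i - MvPolynomial.C γ)) :=
        Ideal.subset_span ⟨0, by simp [h0A]⟩
      simpa using Ideal.mul_mem_left _ f h1
    have hcardpos : 0 < (A 0).card := Finset.card_pos.mpr h0A
    have hgne1 : g ≠ 1 := fun h => by
      rw [h, Polynomial.natDegree_one] at hgdeg; omega
    obtain ⟨r, q, hsplit, hrdeg⟩ : ∃ r q : (MvPolynomial (Fin n) K)[X],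
        e f = g * q + r ∧ r.natDegree < (A 0).card := by
      refine ⟨e f %ₘ g, e f /ₘ g, ?_, ?_⟩
      · conv_lhs => rw [← Polynomial.modByMonic_add_div (e f) g]
        ring
      · have := Polynomial.natDegree_modByMonic_lt (e f) hgmonic hgne1
        rwa [hgdeg] at this
    -- coefficients of r vanish on the subgrid
    have hcoeff : ∀ j, ∀ y : Fin n → K, (∀ i, y i ∈ A i.succ) →
        MvPolynomial.eval y (r.coeff j) = 0 := by
      intro j y hy
      have hmap0 : Polynomial.map (MvPolynomial.eval y) r = 0 := by
        apply Polynomial.eq_zero_of_natDegree_lt_card_of_eval_eq_zero' _ (A 0)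
        · intro γ hγ
          have h1 := MvPolynomial.eval_eq_eval_mv_eval' y γ f
          rw [hf (Fin.cons γ y) (fun i => Fin.cases hγ hy i)] at h1
          rw [hsplit, Polynomial.map_add, Polynomial.map_mul] at h1
          have h2 : Polynomial.eval γ (Polynomial.map (MvPolynomial.eval y) g) = 0 := by
            rw [hg, Polynomial.map_prod, Polynomial.eval_prod]
            apply Finset.prod_eq_zero hγ
            simp
          rw [Polynomial.eval_add, Polynomial.eval_mul, h2, zero_mul, zero_add] at h1
          exact h1.symm
        · calc (Polynomial.map (MvPolynomial.eval y) r).natDegree ≤ r.natDegree :=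
                natDegree_map_le
            _ < (A 0).card := hrdeg
      have := congrArg (fun p => Polynomial.coeff p j) hmap0
      simpa [Polynomial.coeff_map] using this
    -- each coefficient is in the small span
    have hrmem : ∀ j, r.coeff j ∈ Ideal.span (Set.range fun i : Fin n =>
        ∏ γ ∈ A i.succ, (MvPolynomial.X i - MvPolynomial.C γ)) :=
      fun j => IH (fun i => A i.succ) (r.coeff j) (hcoeff j)
    -- push forward via rename Fin.succ
    have hφ : ∀ j, (rename (Fin.succ : Fin n → Fin (n+1))) (r.coeff j) ∈
        Ideal.span (Set.range fun i : Fin (n+1) =>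
          ∏ γ ∈ A i, (MvPolynomial.X i - MvPolynomial.C γ)) := by
      intro j
      have := Ideal.mem_map_of_mem (rename (Fin.succ : Fin n → Fin (n+1))).toRingHom (hrmem j)
      rw [Ideal.map_span] at this
      refine Ideal.span_mono ?_ this
      rintro _ ⟨_, ⟨i, rfl⟩, rfl⟩
      refine ⟨i.succ, ?_⟩
      simp only [AlgHom.toRingHom_eq_coe, RingHom.coe_coe, map_prod, map_sub, rename_X, rename_C]
    set I := Ideal.span (Set.range fun i : Fin (n+1) =>
        ∏ γ ∈ A i, (MvPolynomial.X i - MvPolynomial.C γ)) with hI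
    -- the first generator
    have hf0 : (∏ γ ∈ A 0, (MvPolynomial.X (0 : Fin (n+1)) - MvPolynomial.C γ)) ∈ I :=
      Ideal.subset_span ⟨0, rfl⟩
    have heg : e.symm g = ∏ γ ∈ A 0, (MvPolynomial.X (0 : Fin (n+1)) - MvPolynomial.C γ) := by
      apply e.injective
      rw [AlgEquiv.apply_symm_apply, map_prod]
      refine Finset.prod_congr rfl fun γ _ => ?_
      rw [map_sub, MvPolynomial.finSuccEquiv_X_zero]
      congr 1
      simp [he, MvPolynomial.finSuccEquiv_apply]
    have hrsum : e.symm r ∈ I := by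
      rw [Polynomial.as_sum_support_C_mul_X_pow r, map_sum]
      apply Ideal.sum_mem
      intro j hj
      rw [map_mul, symm_C_eq_rename, map_pow]
      exact Ideal.mul_mem_right _ _ (hφ j)
    have : f = e.symm (g * q + r) := by rw [← hsplit, AlgEquiv.symm_apply_apply]
    rw [this, map_add]
    apply Ideal.add_mem
    · rw [map_mul, heg]
      exact Ideal.mul_mem_right _ _ hf0
    · exact hrsum

theorem stmt_1 {K : Type*} [Field K] (n : ℕ) (A : Fin n → Finset K)
    (hA : ∀ i, (A i).Nonempty) (f : MvPolynomial (Fin n) K) :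
    (∀ x : Fin n → K, (∀ i, x i ∈ A i) → MvPolynomial.eval x f = 0) ↔
      f ∈ Ideal.span (Set.range fun i : Fin n =>
        ∏ γ ∈ A i, (MvPolynomial.X i - MvPolynomial.C γ)) := by
  constructor
  · exact aux_mem_span n A f
  · intro hmem x hx
    have : Ideal.span (Set.range fun i : Fin n =>
        ∏ γ ∈ A i, (MvPolynomial.X i - MvPolynomial.C γ)) ≤
        RingHom.ker (MvPolynomial.eval x) := by
      rw [Ideal.span_le]
      rintro _ ⟨i, rfl⟩
      simp only [SetLike.mem_coe, RingHom.mem_ker, map_prod, map_sub, MvPolynomial.eval_X,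
        MvPolynomial.eval_C]
      exact Finset.prod_eq_zero (hx i) (sub_self _)
    exact this hmem
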